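/- If μ and ν are computable probability measures on Cantor space and ρ = (μ+ν)/2, then a sequence X is Martin-Löf random with respect to ρ if and only if X is Martin-Löf random with respect to μ or with respect to ν. -/

import Mathlib

open MeasureTheory Filter

/-- Cantor space `2^ω`. -/
abbrev Cantor : Type := ℕ → Bool

/-- The first `n` bits of a sequence, as a finite binary string. -/
def pref (X : Cantor) (n : ℕ) : List Bool := List.ofFn fun i : Fin n => X i

/-- The basic open (cylinder) set determined by a finite string `σ`. -/
def cyl (σ : List Bool) : Set Cantor := {X | pref X σ.length = σ}

/-- Partial recursiveness relative to an oracle `O : ℕ → ℕ`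
(the clauses of `Nat.Partrec` plus an oracle clause). -/
inductive RecIn (O : ℕ → ℕ) : (ℕ →. ℕ) → Prop
  | zero : RecIn O (pure 0)
  | succ : RecIn O Nat.succ
  | left : RecIn O ↑fun n : ℕ => n.unpair.1
  | right : RecIn O ↑fun n : ℕ => n.unpair.2
  | oracle : RecIn O ↑O
  | pair {f g} : RecIn O f → RecIn O g → RecIn O fun n => Nat.pair <$> f n <*> g n
  | comp {f g} : RecIn O f → RecIn O g → RecIn O fun n => g n >>= f
  | prec {f g} : RecIn O f → RecIn O g → RecIn O (Nat.unpaired fun a n =>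
      n.rec (f a) fun y IH => do let i ← IH; g (Nat.pair a (Nat.pair y i)))
  | rfind {f} : RecIn O f →
      RecIn O fun a => Nat.rfind fun n => (fun m => m = 0) <$> f (Nat.pair a n)

/-- `f` is computable relative to the oracle `A ∈ 2^ω`. -/
def OracleComputableIn (A : Cantor) {α β : Type} [Primcodable α] [Primcodable β]
    (f : α → β) : Prop :=
  RecIn (fun n => (A n).toNat) fun n =>
    Part.bind (Part.ofOption (Encodable.decode (α := α) n)) fun a =>
      Part.some (Encodable.encode (f a))

/-- `X ∈ 2^ω` is a computable sequence. -/
def ComputableSeq (X : Cantor) : Prop := Computable X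

/-- A computable real: one with a computable sequence of rational approximations. -/
def ComputableReal (r : ℝ) : Prop :=
  ∃ q : ℕ → ℚ, Computable q ∧ ∀ n, |r - (q n : ℝ)| ≤ (2 : ℝ)⁻¹ ^ n

/-- A computable probability measure on Cantor space: the measures of cylinders are
uniformly computable reals. -/
def ComputableMeasure (μ : Measure Cantor) : Prop :=
  IsProbabilityMeasure μ ∧
    ∃ q : List Bool → ℕ → ℚ, Computable₂ q ∧
      ∀ σ n, |(μ (cyl σ)).toReal - (q σ n : ℝ)| ≤ (2 : ℝ)⁻¹ ^ n

/-- A uniformly effectively open sequence of classes: each `U i` is the union of a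
computable enumeration of cylinders. -/
def EffOpen (U : ℕ → Set Cantor) : Prop :=
  ∃ f : ℕ → ℕ → Option (List Bool), Computable₂ f ∧
    ∀ i, U i = ⋃ n : ℕ, Option.elim (f i n) ∅ cyl

/-- A uniformly `A`-effectively open sequence of classes. -/
def EffOpenIn (A : Cantor) (U : ℕ → Set Cantor) : Prop :=
  ∃ f : ℕ → ℕ → Option (List Bool), OracleComputableIn A (fun p : ℕ × ℕ => f p.1 p.2) ∧
    ∀ i, U i = ⋃ n : ℕ, Option.elim (f i n) ∅ cyl

/-- A `μ`-Martin-Löf test. -/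
def MLTest (μ : Measure Cantor) (U : ℕ → Set Cantor) : Prop :=
  EffOpen U ∧ ∀ i, μ (U i) ≤ (2 : ENNReal)⁻¹ ^ i

/-- `X` is `μ`-Martin-Löf random. -/
def MLRandom (μ : Measure Cantor) (X : Cantor) : Prop :=
  ∀ U : ℕ → Set Cantor, MLTest μ U → X ∉ ⋂ i, U i

/-- A `μ`-Martin-Löf test relative to the oracle `A`. -/
def MLTestIn (A : Cantor) (μ : Measure Cantor) (U : ℕ → Set Cantor) : Prop :=
  EffOpenIn A U ∧ ∀ i, μ (U i) ≤ (2 : ENNReal)⁻¹ ^ i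

/-- `X` is `μ`-Martin-Löf random relative to the oracle `A`. -/
def MLRandomIn (A : Cantor) (μ : Measure Cantor) (X : Cantor) : Prop :=
  ∀ U : ℕ → Set Cantor, MLTestIn A μ U → X ∉ ⋂ i, U i

/-- A `μ`-Schnorr test: a Martin-Löf test whose levels have measure exactly `2⁻ⁱ`. -/
def SchnorrTest (μ : Measure Cantor) (U : ℕ → Set Cantor) : Prop :=
  EffOpen U ∧ ∀ i, μ (U i) = (2 : ENNReal)⁻¹ ^ i

/-- `X` is `μ`-Schnorr random. -/
def SchnorrRandom (μ : Measure Cantor) (X : Cantor) : Prop :=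
  ∀ U : ℕ → Set Cantor, SchnorrTest μ U → X ∉ ⋂ i, U i

/-- The set of atoms of `μ`. -/
def Atoms (μ : Measure Cantor) : Set Cantor := {X | 0 < μ {X}}

/-- `lam` is the uniform (Lebesgue) measure on Cantor space. -/
def IsLebesgue (lam : Measure Cantor) : Prop :=
  ∀ σ : List Bool, lam (cyl σ) = (2 : ENNReal)⁻¹ ^ σ.length

/-- A total (truth-table) functional: every output bit is a computable function of a
computably bounded finite initial segment of the input. -/
def TTFunctional (Φ : Cantor → Cantor) : Prop :=
  ∃ (u : ℕ → ℕ) (g : List Bool → ℕ → Bool), Computable u ∧ Computable₂ g ∧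
    ∀ X n, Φ X n = g (pref X (u n)) n

/-- `B` is a Δ⁰₂ sequence: it has a uniformly computable approximation converging
pointwise to it. -/
def Delta02 (B : Cantor) : Prop :=
  ∃ Bs : ℕ → Cantor, Computable₂ (fun s n => Bs s n) ∧
    ∀ n, ∃ N, ∀ s, N ≤ s → Bs s n = B n

/-- `theta As X n` is the least stage `s` with `X↾n = As s↾n`, and `⊤ = +∞` if there
is no such stage. -/
noncomputable def theta (As : ℕ → Cantor) (X : Cantor) (n : ℕ) : ℕ∞ :=
  sInf {e : ℕ∞ | ∃ s : ℕ, e = (s : ℕ∞) ∧ pref X n = pref (As s) n}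

open Classical in
/-- The tally functional determined by the approximation `As`: the output is
`1^{θ(X,0)} 0 1^{θ(X,1)} 0 ⋯`, continuing with `1^ω` as soon as some `θ(X,n) = +∞`
(position `k` is a `0` exactly when `k = θ(X,0) + ⋯ + θ(X,m) + m` for some `m`). -/
noncomputable def tally (As : ℕ → Cantor) (X : Cantor) : Cantor := fun k =>
  if ∃ m : ℕ, (k : ℕ∞) = (∑ i ∈ Finset.range (m + 1), theta As X i) + (m : ℕ∞)
    then false else true

/-- The join `A ⊕ B` of two sequences. -/
def join (A B : Cantor) : Cantor := fun k => if k % 2 = 0 then A (k / 2) else B (k / 2)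
-- auxiliary
def mytake (l : List Bool) (n : ℕ) : List Bool := (List.range n).map fun i => l.getD i false

lemma mytake_primrec : Primrec₂ mytake := by
  have h1 : Primrec₂ fun (p : List Bool × ℕ) (i : ℕ) => p.1.getD i false :=
    (Primrec.list_getD false).comp₂ (Primrec.fst.comp₂ Primrec.fst) Primrec.snd
  exact (Primrec.list_map (Primrec.list_range.comp Primrec.snd) h1)

lemma mytake_pref (X : Cantor) {n m : ℕ} (h : n ≤ m) : mytake (pref X m) n = pref X n := by
  apply List.ext_getElem
  · simp [mytake, pref]
  · intro i h1 h2
    have him : i < m := by simp [mytake] at h1; omega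
    simp [mytake, pref, List.getD_eq_getElem?_getD, List.getElem?_eq_getElem,
      List.getElem_ofFn, him, List.ofFnNthVal]

lemma mem_cyl {σ : List Bool} {X : Cantor} : X ∈ cyl σ ↔ pref X σ.length = σ := Iff.rfl

lemma cyl_subset {σ τ : List Bool} (h : σ.length ≤ τ.length) (he : mytake τ σ.length = σ) :
    cyl τ ⊆ cyl σ := by
  intro X hX
  rw [mem_cyl] at hX ⊢
  calc pref X σ.length = mytake τ σ.length := by rw [← hX, mytake_pref X h]
  _ = σ := he

lemma cyl_inter_empty {σ τ : List Bool} (h : σ.length ≤ τ.length)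
    (he : mytake τ σ.length ≠ σ) : cyl σ ∩ cyl τ = ∅ := by
  ext X
  simp only [Set.mem_inter_iff, Set.mem_empty_iff_false, iff_false, not_and]
  intro h1 h2
  rw [mem_cyl] at h1 h2
  have : mytake τ σ.length = pref X σ.length := by rw [← h2, mytake_pref X h]
  exact he (this.trans h1)

def comb (a b : Option (List Bool)) : Option (List Bool) :=
  a.bind fun σ => b.bind fun τ =>
    if σ.length ≤ τ.length then (if mytake τ σ.length = σ then some τ else none)
    else (if mytake σ τ.length = τ then some σ else none)

lemma comb_elim (a b : Option (List Bool)) :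
    Option.elim (comb a b) ∅ cyl = (Option.elim a ∅ cyl) ∩ (Option.elim b ∅ cyl) := by
  rcases a with _ | σ
  · simp [comb]
  rcases b with _ | τ
  · simp [comb]
  simp only [comb, Option.bind_some, Option.elim_some]
  split_ifs with h1 h2 h3
  · exact (Set.inter_eq_self_of_subset_right (cyl_subset h1 h2)).symm
  · simpa using (cyl_inter_empty h1 h2).symm
  · exact (Set.inter_eq_self_of_subset_left (cyl_subset (le_of_not_ge h1) h3)).symm
  · simpa [Set.inter_comm] using (cyl_inter_empty (le_of_not_ge h1) h3).symm

lemma comb_primrec : Primrec₂ comb := by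
  set γ := ((Option (List Bool) × Option (List Bool)) × List Bool) × List Bool with hγ
  have pσ : Primrec fun q : γ => q.1.2 := Primrec.snd.comp Primrec.fst
  have pτ : Primrec fun q : γ => q.2 := Primrec.snd
  have hlen : PrimrecPred fun q : γ => q.1.2.length ≤ q.2.length :=
    Primrec.nat_le.comp (Primrec.list_length.comp pσ) (Primrec.list_length.comp pτ)
  have he1 : PrimrecPred fun q : γ => mytake q.2 q.1.2.length = q.1.2 :=
    Primrec.eq.comp (mytake_primrec.comp pτ (Primrec.list_length.comp pσ)) pσ
  have he2 : PrimrecPred fun q : γ => mytake q.1.2 q.2.length = q.2 :=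
    Primrec.eq.comp (mytake_primrec.comp pσ (Primrec.list_length.comp pτ)) pτ
  have core : Primrec fun q : γ =>
      if q.1.2.length ≤ q.2.length then (if mytake q.2 q.1.2.length = q.1.2 then some q.2 else none)
      else (if mytake q.1.2 q.2.length = q.2 then some q.1.2 else none) :=
    Primrec.ite hlen
      (Primrec.ite he1 (Primrec.option_some.comp pτ) (Primrec.const none))
      (Primrec.ite he2 (Primrec.option_some.comp pσ) (Primrec.const none))
  have inner : Primrec fun p : (Option (List Bool) × Option (List Bool)) × List Bool =>
      p.1.2.bind fun τ =>
        if p.2.length ≤ τ.length then (if mytake τ p.2.length = p.2 then some τ else none)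
        else (if mytake p.2 τ.length = τ then some p.2 else none) :=
    Primrec.option_bind (Primrec.snd.comp Primrec.fst) core
  exact Primrec.option_bind Primrec.fst inner

lemma rho_apply (μ ν : Measure Cantor) (S : Set Cantor) :
    ((2 : ENNReal)⁻¹ • (μ + ν)) S = 2⁻¹ * (μ S + ν S) := by
  simp [Measure.smul_apply, Measure.add_apply, smul_eq_mul, mul_add]

lemma half_random {μ ν : Measure Cantor} {X : Cantor} (h : MLRandom μ X) :
    MLRandom ((2 : ENNReal)⁻¹ • (μ + ν)) X := by
  rintro U ⟨⟨f, hf, hUf⟩, hbound⟩ hX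
  apply h (fun i => U (i + 1))
  · refine ⟨⟨fun i n => f (i + 1) n,
      hf.comp (Computable.succ.comp Computable.fst) Computable.snd,
      fun i => hUf (i + 1)⟩, fun i => ?_⟩
    have h1 : (2 : ENNReal)⁻¹ * μ (U (i + 1)) ≤ (2 : ENNReal)⁻¹ * (2 : ENNReal)⁻¹ ^ i := by
      calc (2 : ENNReal)⁻¹ * μ (U (i + 1))
          ≤ (2 : ENNReal)⁻¹ * (μ (U (i + 1)) + ν (U (i + 1))) := by
            exact mul_le_mul_right (le_add_right le_rfl) _
        _ = ((2 : ENNReal)⁻¹ • (μ + ν)) (U (i + 1)) := (rho_apply μ ν _).symm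
        _ ≤ (2 : ENNReal)⁻¹ ^ (i + 1) := hbound (i + 1)
        _ = (2 : ENNReal)⁻¹ * (2 : ENNReal)⁻¹ ^ i := by ring
    exact (ENNReal.mul_le_mul_iff_right (by norm_num) (by norm_num)).mp h1
  · exact Set.mem_iInter.mpr fun i => Set.mem_iInter.mp hX (i + 1)

/-- If `μ` and `ν` are computable probability measures and `ρ = (μ+ν)/2`, then
`MLR_ρ = MLR_μ ∪ MLR_ν`. -/
theorem stmt0 (μ ν : Measure Cantor) (hμ : ComputableMeasure μ) (hν : ComputableMeasure ν)
    (X : Cantor) :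
    MLRandom ((2 : ENNReal)⁻¹ • (μ + ν)) X ↔ MLRandom μ X ∨ MLRandom ν X := by
  constructor
  · intro hρ
    by_contra hc
    push_neg at hc
    obtain ⟨hcμ, hcν⟩ := hc
    simp only [MLRandom, not_forall, not_not] at hcμ hcν
    obtain ⟨U, ⟨⟨f, hf, hUf⟩, hUb⟩, hXU⟩ := hcμ
    obtain ⟨V, ⟨⟨g, hg, hVg⟩, hVb⟩, hXV⟩ := hcν
    set h : ℕ → ℕ → Option (List Bool) :=
      fun i n => comb (f i n.unpair.1) (g i n.unpair.2) with hdef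
    have hcomp : Computable₂ h := by
      have c1 : Computable fun p : ℕ × ℕ => f p.1 p.2.unpair.1 :=
        hf.comp Computable.fst (Computable.fst.comp (Computable.unpair.comp Computable.snd))
      have c2 : Computable fun p : ℕ × ℕ => g p.1 p.2.unpair.2 :=
        hg.comp Computable.fst (Computable.snd.comp (Computable.unpair.comp Computable.snd))
      exact comb_primrec.to_comp.comp c1 c2
    have hset : ∀ i, U i ∩ V i = ⋃ n : ℕ, Option.elim (h i n) ∅ cyl := by
      intro i
      rw [hUf i, hVg i]
      ext x
      simp only [Set.mem_inter_iff, Set.mem_iUnion, hdef, comb_elim]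
      constructor
      · rintro ⟨⟨a, ha⟩, ⟨b, hb⟩⟩
        exact ⟨Nat.pair a b, by simpa [Nat.unpair_pair] using ⟨ha, hb⟩⟩
      · rintro ⟨n, hn1, hn2⟩
        exact ⟨⟨n.unpair.1, hn1⟩, ⟨n.unpair.2, hn2⟩⟩
    refine hρ (fun i => U i ∩ V i) ⟨⟨h, hcomp, hset⟩, fun i => ?_⟩
      (Set.mem_iInter.mpr fun i =>
        ⟨Set.mem_iInter.mp hXU i, Set.mem_iInter.mp hXV i⟩)
    calc ((2 : ENNReal)⁻¹ • (μ + ν)) (U i ∩ V i)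
        = 2⁻¹ * (μ (U i ∩ V i) + ν (U i ∩ V i)) := rho_apply μ ν _
      _ ≤ 2⁻¹ * ((2 : ENNReal)⁻¹ ^ i + (2 : ENNReal)⁻¹ ^ i) := by
          refine mul_le_mul_right (add_le_add ?_ ?_) _
          · exact le_trans (measure_mono Set.inter_subset_left) (hUb i)
          · exact le_trans (measure_mono Set.inter_subset_right) (hVb i)
      _ = (2 : ENNReal)⁻¹ ^ i := by
          rw [← two_mul, ← mul_assoc, ENNReal.inv_mul_cancel two_ne_zero ENNReal.ofNat_ne_top,
            one_mul]
  · rintro (h | h)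
    · exact half_random h
    · rw [show μ + ν = ν + μ from add_comm μ ν]
      exact half_random h
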